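/- Let M ≥ 1 and m ≥ 2 be integers and let a_k^{(n)} (k, n ≥ 0) be complex numbers. Suppose there are nonzero complex numbers r_1, …, r_m with |r_1| > |r_2| > … > |r_m| such that for every k ≥ 0 there are nonzero complex constants c_{1,k}, …, c_{m,k}, reals ρ_k with 0 < ρ_k < |r_m| and μ_k > 0, and a sequence (b_k^{(n)})_{n≥0} with |b_k^{(n)}| ≤ μ_k ρ_k^n, satisfying a_k^{(n)} = Σ_{ℓ=1}^{m} c_{ℓ,k} r_ℓ^{n+k+1} + b_k^{(n)} for all n ≥ 0. For integers k ≥ 0 and 1 ≤ j ≤ m define the leading constant c_{k,j} := Σ_{κ ∈ {1,…,j}^j} det M_κ, where M_κ is the j×j matrix whose (s, ℓ) entry (s = 0, …, j−1; ℓ = 1, …, j) is c_{κ_ℓ, k+ℓ−1} r_{κ_ℓ}^{k+ℓ+s}, and set c_{k,0} := 1. Assume c_{k,j} ≠ 0 for all 0 ≤ k ≤ M and 0 ≤ j ≤ m. Then: (i) for every i = 0, 1, …, M−1 and j = 1, 2, …, m−1, the quantity v_{i+j(M+1)}^{(n)} := C_{i,j+1}^{(n)} C_{i+1,j−1}^{(n)}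 / (C_{i,j}^{(n)} C_{i+1,j}^{(n)}) is defined for all sufficiently large n and converges to 0 as n → ∞; and (ii) for every j = 0, 1, …, m−1, the quantity v_{M+j(M+1)}^{(n)} := C_{M,j+1}^{(n)} C_{0,j}^{(n)} / (C_{M,j}^{(n)} C_{0,j+1}^{(n)}) is defined for all sufficiently large n and converges to the constant ĉ_j := c_{M,j+1} c_{0,j} / (c_{M,j} c_{0,j+1}) as n → ∞. -/

import Mathlib

/-- The Casorati determinant: `C_{k,0}^{(n)} = 1` and for `j ≥ 1`,
`C_{k,j}^{(n)} = det (a_{k+ℓ}^{(n+s)})_{s,ℓ = 0,…,j-1}`. -/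
noncomputable def casorati (a : ℕ → ℕ → ℂ) (k j n : ℕ) : ℂ :=
  Matrix.det (Matrix.of fun s ℓ : Fin j => a (k + (ℓ : ℕ)) (n + (s : ℕ)))

/-- The leading constant `c_{k,j} = Σ_{κ ∈ {1,…,j}^j} det M_κ`, where the `(s,ℓ)`
entry of `M_κ` is `c_{κ_ℓ, k+ℓ-1} r_{κ_ℓ}^{k+ℓ+s}` (here 0-based in `ℓ`, `s`);
`c_{k,0} = 1`. -/
noncomputable def leadConst (m : ℕ) (r : Fin m → ℂ) (c : ℕ → Fin m → ℂ)
    (k j : ℕ) (h : j ≤ m) : ℂ :=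
  ∑ κ : Fin j → Fin j,
    Matrix.det (Matrix.of fun s ℓ : Fin j =>
      c (k + (ℓ : ℕ)) (Fin.castLE h (κ ℓ)) *
        r (Fin.castLE h (κ ℓ)) ^ (k + (ℓ : ℕ) + 1 + (s : ℕ)))

open Finset Filter Matrix

lemma sm_le {d : ℕ} (f : Fin d → ℕ) (hf : StrictMono f) : ∀ v, (h : v < d) → v ≤ f ⟨v, h⟩ := by
  intro v
  induction v with
  | zero => intro h; exact Nat.zero_le _
  | succ v ih =>
    intro h
    have h' : v < d := by omega
    have h1 := hf (show (⟨v, h'⟩ : Fin d) < ⟨v + 1, h⟩ by simp [Fin.lt_def])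
    have h2 := ih h'
    omega

lemma prodA {m d : ℕ} (hdm : d ≤ m) (w : Fin m → ℝ)
    (hw : ∀ t, 0 < w t) (hdec : ∀ t1 t2 : Fin m, t1 < t2 → w t2 < w t1)
    (S : Finset (Fin m)) (hS : S.card = d) :
    (∏ t ∈ S, w t) ≤ ∏ i : Fin d, w (Fin.castLE hdm i) ∧
    ((∃ t ∈ S, d ≤ (t : ℕ)) → (∏ t ∈ S, w t) < ∏ i : Fin d, w (Fin.castLE hdm i)) := by
  have hdec' : ∀ t1 t2 : Fin m, t1 ≤ t2 → w t2 ≤ w t1 := by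
    intro t1 t2 h
    rcases eq_or_lt_of_le h with rfl | h
    · exact le_refl _
    · exact (hdec _ _ h).le
  set σ := S.orderEmbOfFin hS with hσ
  have hmem : ∀ i, σ i ∈ S := fun i => S.orderEmbOfFin_mem hS i
  have hrw : (∏ t ∈ S, w t) = ∏ i : Fin d, w (σ i) := by
    refine (Finset.prod_bij (fun (i : Fin d) _ => σ i) (fun i _ => hmem i) ?_ ?_ ?_).symm
    · intro i _ j _ hij; exact σ.injective hij
    · intro t ht
      have : t ∈ Set.range σ := by rw [Finset.range_orderEmbOfFin]; exact ht
      obtain ⟨i, hi⟩ := this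
      exact ⟨i, Finset.mem_univ i, hi⟩
    · intro i _; rfl
  have hle_i : ∀ i : Fin d, (i : ℕ) ≤ (σ i : ℕ) := by
    intro i
    have : StrictMono (fun i : Fin d => ((σ i : Fin m) : ℕ)) := fun x y hxy => by
      exact_mod_cast (σ.strictMono hxy)
    have := sm_le _ this i i.2
    simpa using this
  have hfac : ∀ i : Fin d, w (σ i) ≤ w (Fin.castLE hdm i) := by
    intro i
    exact hdec' _ _ (by rw [Fin.le_def]; simpa using hle_i i)
  constructor
  · rw [hrw]; exact Finset.prod_le_prod (fun i _ => (hw _).le) (fun i _ => hfac i)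
  · rintro ⟨t, ht, hdt⟩
    rw [hrw]
    have : t ∈ Set.range σ := by rw [Finset.range_orderEmbOfFin]; exact ht
    obtain ⟨i0, hi0⟩ := this
    refine Finset.prod_lt_prod (fun i _ => hw _) (fun i _ => hfac i) ⟨i0, Finset.mem_univ _, ?_⟩
    apply hdec
    rw [Fin.lt_def]
    have : (i0 : ℕ) < d := i0.2
    simp only [Fin.coe_castLE]
    rw [hi0]
    omega

lemma prodQ {m j : ℕ} (hm1 : 1 ≤ m) (hj : j ≤ m) (w : Fin m → ℝ)
    (hw : ∀ t, 0 < w t) (hwdec : ∀ t1 t2 : Fin m, t1 < t2 → w t2 < w t1)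
    (q : Fin j → ℝ) (κ : Fin j → Option (Fin m))
    (hqs : ∀ ℓ t, κ ℓ = some t → q ℓ = w t)
    (hqn : ∀ ℓ, κ ℓ = none → (0 < q ℓ ∧ q ℓ < w ⟨m - 1, by omega⟩))
    (hinj : ∀ ℓ1 ℓ2 t, κ ℓ1 = some t → κ ℓ2 = some t → ℓ1 = ℓ2)
    (hbad : (∃ ℓ, κ ℓ = none) ∨ (∃ ℓ t, κ ℓ = some t ∧ j ≤ (t : ℕ))) :
    (∏ ℓ, q ℓ) < ∏ i : Fin j, w (Fin.castLE hj i) := by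
  classical
  have hwdec' : ∀ t1 t2 : Fin m, t1 ≤ t2 → w t2 ≤ w t1 := by
    intro t1 t2 h
    rcases eq_or_lt_of_le h with rfl | h
    · exact le_refl _
    · exact (hwdec _ _ h).le
  have hqpos : ∀ ℓ, 0 < q ℓ := by
    intro ℓ
    rcases h : κ ℓ with _ | t
    · exact (hqn ℓ h).1
    · rw [hqs ℓ t h]; exact hw t
  set T : Finset (Fin j) := Finset.univ.filter (fun ℓ => (κ ℓ).isSome) with hT
  have hτ : ∀ ℓ ∈ T, ∃ t, κ ℓ = some t := by
    intro ℓ hℓ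
    rw [hT, Finset.mem_filter] at hℓ
    exact Option.isSome_iff_exists.mp hℓ.2
  set τ : Fin j → Fin m := fun ℓ => (κ ℓ).getD ⟨m - 1, by omega⟩ with hτdef
  have hτs : ∀ ℓ ∈ T, κ ℓ = some (τ ℓ) := by
    intro ℓ hℓ
    obtain ⟨t, ht⟩ := hτ ℓ hℓ
    rw [ht]; simp [hτdef, ht]
  have hinjOn : Set.InjOn τ T := by
    intro ℓ1 h1 ℓ2 h2 heq
    exact hinj ℓ1 ℓ2 (τ ℓ1) (hτs ℓ1 h1) (by rw [heq]; exact hτs ℓ2 h2)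
  set S : Finset (Fin m) := T.image τ with hS
  have hScard : S.card = T.card := Finset.card_image_of_injOn hinjOn
  have hTprod : ∏ ℓ ∈ T, q ℓ = ∏ t ∈ S, w t := by
    rw [hS, Finset.prod_image hinjOn]
    exact Finset.prod_congr rfl (fun ℓ hℓ => hqs ℓ (τ ℓ) (hτs ℓ hℓ))
  by_cases hTu : T = Finset.univ
  · -- all entries are some; must have a big value
    obtain ⟨ℓ0, t0, hs0, hbig⟩ : ∃ ℓ t, κ ℓ = some t ∧ j ≤ (t : ℕ) := by
      rcases hbad with ⟨ℓ, hnone⟩ | h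
      · exfalso
        have : ℓ ∈ T := hTu ▸ Finset.mem_univ ℓ
        obtain ⟨t, ht⟩ := hτ ℓ this
        rw [hnone] at ht; exact Option.some_ne_none t ht.symm
      · exact h
    have hScard' : S.card = j := by
      rw [hScard, hTu, Finset.card_univ, Fintype.card_fin]
    have h1 : ∏ ℓ, q ℓ = ∏ t ∈ S, w t := by
      rw [← hTprod, hTu]
    have ht0S : t0 ∈ S := by
      rw [hS]
      refine Finset.mem_image.mpr ⟨ℓ0, hTu ▸ Finset.mem_univ ℓ0, ?_⟩
      have := hτs ℓ0 (hTu ▸ Finset.mem_univ ℓ0)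
      rw [hs0] at this
      exact (Option.some_injective _ this).symm
    rw [h1]
    exact (prodA hj w hw hwdec S hScard').2 ⟨t0, ht0S, hbig⟩
  · -- there is a none column
    set d : ℕ := T.card with hd
    have hdj : d ≤ j := by
      rw [hd]
      calc T.card ≤ Finset.univ.card := Finset.card_le_card (Finset.subset_univ T)
        _ = j := by rw [Finset.card_univ, Fintype.card_fin]
    have hdm : d ≤ m := le_trans hdj hj
    set U : Finset (Fin j) := Finset.univ.image (Fin.castLE hdj) with hU
    have hUcard : U.card = d := by
      rw [hU, Finset.card_image_of_injective _ (Fin.castLE_injective hdj),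
        Finset.card_univ, Fintype.card_fin]
    have hUprod : ∏ i ∈ U, w (Fin.castLE hj i) = ∏ i : Fin d, w (Fin.castLE hdm i) := by
      rw [hU, Finset.prod_image (fun x _ y _ h => Fin.castLE_injective hdj h)]
      exact Finset.prod_congr rfl (fun i _ => by congr 1)
    -- split both products
    have hsq : ∏ ℓ, q ℓ = (∏ ℓ ∈ T, q ℓ) * ∏ ℓ ∈ Finset.univ \ T, q ℓ := by
      rw [← Finset.prod_sdiff (Finset.subset_univ T)]; ring
    have hsR : (∏ i : Fin j, w (Fin.castLE hj i)) =
        (∏ i ∈ U, w (Fin.castLE hj i)) * ∏ i ∈ Finset.univ \ U, w (Fin.castLE hj i) := by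
      rw [← Finset.prod_sdiff (Finset.subset_univ U)]; ring
    have hcards : (Finset.univ \ T).card = (Finset.univ \ U).card := by
      rw [Finset.card_sdiff_of_subset (Finset.subset_univ T), Finset.card_sdiff_of_subset (Finset.subset_univ U),
        hUcard]
    -- strict inequality on the complement part
    have hTcne : (Finset.univ \ T).Nonempty := by
      rw [Finset.sdiff_nonempty]
      intro hsub
      exact hTu (Finset.eq_univ_of_forall (fun x => hsub (Finset.mem_univ x)))
    set e := Finset.equivOfCardEq hcards with he
    have hcompl : (∏ ℓ ∈ Finset.univ \ T, q ℓ) < ∏ i ∈ Finset.univ \ U, w (Fin.castLE hj i) := by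
      have h2 : (∏ i ∈ Finset.univ \ U, w (Fin.castLE hj i)) =
          ∏ x ∈ (Finset.univ \ T).attach, w (Fin.castLE hj (e x)) := by
        rw [← Finset.prod_coe_sort (Finset.univ \ U) (fun i => w (Fin.castLE hj i))]
        rw [← Equiv.prod_comp e (fun (x : (Finset.univ \ U : Finset (Fin j))) => w (Fin.castLE hj x))]
        rw [Finset.prod_coe_sort_eq_attach]
      have h1 : (∏ ℓ ∈ Finset.univ \ T, q ℓ) = ∏ x ∈ (Finset.univ \ T).attach, q x := by
        rw [Finset.prod_attach]
      rw [h1, h2]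
      refine Finset.prod_lt_prod_of_nonempty (fun x _ => hqpos _) (fun x _ => ?_)
        (by rwa [Finset.attach_nonempty_iff])
      have hxnone : κ x.1 = none := by
        have hx2 := x.2
        rw [Finset.mem_sdiff] at hx2
        refine Option.not_isSome_iff_eq_none.mp (fun hs => hx2.2 ?_)
        exact Finset.mem_filter.mpr ⟨Finset.mem_univ _, hs⟩
      refine lt_of_lt_of_le (hqn x.1 hxnone).2 (hwdec' _ _ ?_)
      rw [Fin.le_def]
      simp only [Fin.coe_castLE]
      have := (Fin.castLE hj (e x)).isLt
      have h3 : ((e x : Fin j) : ℕ) < j := (e x : Fin j).isLt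
      omega
    -- the T part
    have hTle : (∏ ℓ ∈ T, q ℓ) ≤ ∏ i ∈ U, w (Fin.castLE hj i) := by
      rw [hTprod, hUprod]
      exact (prodA hdm w hw hwdec S (by rw [hScard])).1
    rw [hsq, hsR]
    have hposU : 0 < ∏ i ∈ U, w (Fin.castLE hj i) :=
      Finset.prod_pos (fun i _ => hw _)
    have hposTc : 0 ≤ ∏ ℓ ∈ Finset.univ \ T, q ℓ :=
      (Finset.prod_pos (fun ℓ _ => hqpos ℓ)).le
    exact mul_lt_mul' hTle hcompl hposTc hposU

/-- Leibniz norm bound for determinants with column-wise bounds. -/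
lemma det_norm_le {j : ℕ} (A : Matrix (Fin j) (Fin j) ℂ) (B : Fin j → ℝ)
    (hB : ∀ ℓ, 0 ≤ B ℓ) (h : ∀ s ℓ, ‖A s ℓ‖ ≤ B ℓ) :
    ‖A.det‖ ≤ (j.factorial : ℝ) * ∏ ℓ, B ℓ := by
  rw [Matrix.det_apply]
  calc ‖∑ σ : Equiv.Perm (Fin j), Equiv.Perm.sign σ • ∏ i, A (σ i) i‖
      ≤ ∑ σ : Equiv.Perm (Fin j), ‖(Equiv.Perm.sign σ : ℤ) • ∏ i, A (σ i) i‖ :=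
        norm_sum_le _ _
    _ ≤ ∑ _σ : Equiv.Perm (Fin j), ∏ ℓ, B ℓ := by
        refine Finset.sum_le_sum fun σ _ => ?_
        rw [zsmul_eq_mul, norm_mul]
        have h1 : ‖((Equiv.Perm.sign σ : ℤ) : ℂ)‖ = 1 := by
          rcases Int.units_eq_one_or (Equiv.Perm.sign σ) with h | h <;> simp [h]
        rw [h1, one_mul, norm_prod]
        exact Finset.prod_le_prod (fun i _ => norm_nonneg _) (fun i _ => h _ _)
    _ = (j.factorial : ℝ) * ∏ ℓ, B ℓ := by
        rw [Finset.sum_const, Finset.card_univ, Fintype.card_perm, Fintype.card_fin,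
          nsmul_eq_mul]

/-- If `‖F n‖ ≤ K * q ^ n` with `0 ≤ q < ‖z‖`, then `F n / z ^ n → 0`. -/
lemma tendsto_div_pow_zero {F : ℕ → ℂ} {K q : ℝ} {z : ℂ} (hq : 0 ≤ q) (hqz : q < ‖z‖)
    (hF : ∀ n, ‖F n‖ ≤ K * q ^ n) :
    Tendsto (fun n => F n / z ^ n) atTop (nhds 0) := by
  have hz : 0 < ‖z‖ := lt_of_le_of_lt hq hqz
  apply squeeze_zero_norm (a := fun n => K * (q / ‖z‖) ^ n)
  · intro n
    rw [norm_div, norm_pow, div_pow, ← mul_div_assoc]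
    have := hF n
    gcongr
  · have : Tendsto (fun n : ℕ => (q / ‖z‖) ^ n) atTop (nhds 0) :=
      tendsto_pow_atTop_nhds_zero_of_lt_one (by positivity) (by rw [div_lt_one hz]; exact hqz)
    simpa using this.const_mul K



noncomputable def gg {m : ℕ} (r : Fin m → ℂ) (c : ℕ → Fin m → ℂ) (b : ℕ → ℕ → ℂ)
    (o : Option (Fin m)) (K N : ℕ) : ℂ :=
  o.elim (b K N) (fun t => c K t * r t ^ (N + K + 1))

noncomputable def DD {m : ℕ} (r : Fin m → ℂ) (c : ℕ → Fin m → ℂ) (b : ℕ → ℕ → ℂ)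
    (k j : ℕ) (κ : Fin j → Option (Fin m)) (n : ℕ) : ℂ :=
  Matrix.det (Matrix.of fun s ℓ : Fin j => gg r c b (κ ℓ) (k + (ℓ : ℕ)) (n + (s : ℕ)))

section
variable {m : ℕ} (r : Fin m → ℂ) (c : ℕ → Fin m → ℂ) (b : ℕ → ℕ → ℂ)

/-- factorization of `DD` pulling the column scalars out -/
lemma DD_factor (k j n : ℕ) (κ : Fin j → Option (Fin m)) :
    DD r c b k j κ n =
      (∏ ℓ : Fin j, (κ ℓ).elim 1 (fun t => c (k + (ℓ : ℕ)) t * r t ^ (n + (k + (ℓ : ℕ)) + 1))) *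
      Matrix.det (Matrix.of fun s ℓ : Fin j =>
        (κ ℓ).elim (b (k + (ℓ : ℕ)) (n + (s : ℕ))) (fun t => r t ^ (s : ℕ))) := by
  rw [DD, ← Matrix.det_mul_row]
  congr 1
  funext s ℓ
  simp only [Matrix.of_apply]
  rcases κ ℓ with _ | t
  · simp [gg]
  · show c (k + (ℓ : ℕ)) t * r t ^ ((n + (s : ℕ)) + (k + (ℓ : ℕ)) + 1) = _
    show _ = (c (k + (ℓ : ℕ)) t * r t ^ (n + (k + (ℓ : ℕ)) + 1)) * r t ^ (s : ℕ)
    rw [show (n + (s : ℕ)) + (k + (ℓ : ℕ)) + 1 = (n + (k + (ℓ : ℕ)) + 1) + (s : ℕ) by omega,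
      pow_add, mul_assoc]
end

section
variable {m : ℕ} (r : Fin m → ℂ) (c : ℕ → Fin m → ℂ)

noncomputable def LL (k j : ℕ) (κ : Fin j → Option (Fin m)) : ℂ :=
  Matrix.det (Matrix.of fun s ℓ : Fin j =>
    (κ ℓ).elim 0 (fun t => if (t : ℕ) < j then
      c (k + (ℓ : ℕ)) t * r t ^ (k + (ℓ : ℕ) + 1 + (s : ℕ)) else 0))

lemma LL_factor (k j : ℕ) (κ : Fin j → Option (Fin m)) :
    LL r c k j κ =
      (∏ ℓ : Fin j, (κ ℓ).elim 0 (fun t => if (t : ℕ) < j then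
        c (k + (ℓ : ℕ)) t * r t ^ (k + (ℓ : ℕ) + 1) else 0)) *
      Matrix.det (Matrix.of fun s ℓ : Fin j =>
        (κ ℓ).elim 1 (fun t => r t ^ (s : ℕ))) := by
  rw [LL, ← Matrix.det_mul_row]
  congr 1
  funext s ℓ
  simp only [Matrix.of_apply]
  rcases κ ℓ with _ | t
  · simp
  · show (if (t : ℕ) < j then c (k + (ℓ : ℕ)) t * r t ^ (k + (ℓ : ℕ) + 1 + (s : ℕ)) else 0) =
      (if (t : ℕ) < j then c (k + (ℓ : ℕ)) t * r t ^ (k + (ℓ : ℕ) + 1) else 0) * r t ^ (s : ℕ)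
    by_cases h : (t : ℕ) < j
    · rw [if_pos h, if_pos h, pow_add, mul_assoc]
    · rw [if_neg h, if_neg h, zero_mul]
end

section
variable {m : ℕ} (r : Fin m → ℂ) (c : ℕ → Fin m → ℂ) (b : ℕ → ℕ → ℂ)

lemma casorati_eq_sum (a : ℕ → ℕ → ℂ)
    (ha : ∀ K N : ℕ, a K N = (∑ ℓ, c K ℓ * r ℓ ^ (N + K + 1)) + b K N)
    (k j n : ℕ) :
    casorati a k j n = ∑ κ : Fin j → Option (Fin m), DD r c b k j κ n := by
  have hA : ∀ K N, a K N = ∑ o : Option (Fin m), gg r c b o K N := by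
    intro K N
    rw [ha, Fintype.sum_option]
    simp [gg, add_comm]
  unfold casorati
  rw [← Matrix.det_transpose]
  have hrows : (Matrix.of fun s ℓ : Fin j => a (k + (ℓ : ℕ)) (n + (s : ℕ)))ᵀ =
      fun ℓ : Fin j => ∑ o : Option (Fin m),
        (fun s : Fin j => gg r c b o (k + (ℓ : ℕ)) (n + (s : ℕ))) := by
    funext ℓ s
    simp only [Matrix.transpose_apply, Matrix.of_apply, Finset.sum_apply]
    exact hA _ _
  rw [hrows]
  have hms := MultilinearMap.map_sum
      (Matrix.detRowAlternating (R := ℂ) (n := Fin j)).toMultilinearMap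
      (g := fun (ℓ : Fin j) (o : Option (Fin m)) =>
        fun s : Fin j => gg r c b o (k + (ℓ : ℕ)) (n + (s : ℕ)))
  exact hms.trans (Finset.sum_congr rfl fun κ _ => by
    rw [DD, ← Matrix.det_transpose]; rfl)
end

lemma key {m : ℕ} (hm1 : 1 ≤ m) (a b : ℕ → ℕ → ℂ) (r : Fin m → ℂ) (c : ℕ → Fin m → ℂ)
    (ρ μ : ℕ → ℝ)
    (hr0 : ∀ ℓ, r ℓ ≠ 0)
    (hrdec : ∀ ℓ₁ ℓ₂ : Fin m, ℓ₁ < ℓ₂ → ‖r ℓ₂‖ < ‖r ℓ₁‖)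
    (hρpos : ∀ k, 0 < ρ k)
    (hρlt : ∀ k, ρ k < ‖r ⟨m - 1, by omega⟩‖)
    (hμ : ∀ k, 0 < μ k)
    (hb : ∀ k n : ℕ, ‖b k n‖ ≤ μ k * ρ k ^ n)
    (ha : ∀ k n : ℕ, a k n = (∑ ℓ, c k ℓ * r ℓ ^ (n + k + 1)) + b k n)
    (k j : ℕ) (hj : j ≤ m) :
    Tendsto (fun n => casorati a k j n / (∏ ℓ : Fin j, r (Fin.castLE hj ℓ)) ^ n) atTop
      (nhds (leadConst m r c k j hj)) := by
  classical
  set R : ℂ := ∏ ℓ : Fin j, r (Fin.castLE hj ℓ) with hR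
  have hR0 : R ≠ 0 := Finset.prod_ne_zero_iff.mpr (fun ℓ _ => hr0 _)
  set w : Fin m → ℝ := fun t => ‖r t‖ with hwdef
  have hw : ∀ t, 0 < w t := fun t => norm_pos_iff.mpr (hr0 t)
  have hnormR : ‖R‖ = ∏ i : Fin j, w (Fin.castLE hj i) := by
    rw [hR]; exact norm_prod _ _
  set ι : (Fin j → Fin j) → (Fin j → Option (Fin m)) :=
    fun κ' ℓ => some (Fin.castLE hj (κ' ℓ)) with hι
  have hιinj : Function.Injective ι := by
    intro κ1 κ2 h
    funext ℓ
    have := congrFun h ℓ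
    rw [hι] at this
    exact Fin.castLE_injective hj (Option.some_injective _ this)
  -- sum of limits equals leadConst
  have hvanish : ∀ κ ∉ Finset.univ.image ι, LL r c k j κ = 0 := by
    intro κ hκ
    have hex : ∃ ℓ, ∀ t : Fin j, κ ℓ ≠ some (Fin.castLE hj t) := by
      by_contra hcon
      push_neg at hcon
      apply hκ
      refine Finset.mem_image.mpr ⟨fun ℓ => Classical.choose (hcon ℓ), Finset.mem_univ _, ?_⟩
      funext ℓ
      exact (Classical.choose_spec (hcon ℓ)).symm
    obtain ⟨ℓ0, hℓ0⟩ := hex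
    rw [LL]
    apply Matrix.det_eq_zero_of_column_eq_zero ℓ0
    intro s
    simp only [Matrix.of_apply]
    rcases hk : κ ℓ0 with _ | t
    · rfl
    · have ht : ¬ ((t : ℕ) < j) := by
        intro htj
        exact hℓ0 ⟨(t : ℕ), htj⟩ (by rw [hk]; congr 1)
      show (if (t : ℕ) < j then _ else 0) = 0
      rw [if_neg ht]
  have hsum : (∑ κ : Fin j → Option (Fin m), LL r c k j κ) = leadConst m r c k j hj := by
    rw [← Finset.sum_subset (Finset.subset_univ (Finset.univ.image ι))
      (fun κ _ hκ => hvanish κ hκ)]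
    rw [Finset.sum_image (fun x _ y _ h => hιinj h)]
    rw [leadConst]
    refine Finset.sum_congr rfl (fun κ' _ => ?_)
    rw [LL]
    congr 1
    funext s ℓ
    simp only [Matrix.of_apply, hι, Option.elim]
    rw [if_pos (by exact (κ' ℓ).isLt)]
  -- per-κ tendsto
  have hten : ∀ κ : Fin j → Option (Fin m),
      Tendsto (fun n => DD r c b k j κ n / R ^ n) atTop (nhds (LL r c k j κ)) := by
    intro κ
    by_cases hdup : ∃ ℓ1 ℓ2 t, ℓ1 ≠ ℓ2 ∧ κ ℓ1 = some t ∧ κ ℓ2 = some t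
    · obtain ⟨ℓ1, ℓ2, t, hne, h1, h2⟩ := hdup
      have hDD0 : ∀ n, DD r c b k j κ n = 0 := by
        intro n
        rw [DD_factor]
        have : Matrix.det (Matrix.of fun s ℓ : Fin j =>
            (κ ℓ).elim (b (k + (ℓ : ℕ)) (n + (s : ℕ))) (fun t => r t ^ (s : ℕ))) = 0 := by
          apply Matrix.det_zero_of_column_eq hne
          intro s
          simp only [Matrix.of_apply, h1, h2, Option.elim]
        rw [this, mul_zero]
      have hLL0 : LL r c k j κ = 0 := by
        rw [LL_factor]
        have : Matrix.det (Matrix.of fun s ℓ : Fin j =>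
            (κ ℓ).elim 1 (fun t => r t ^ (s : ℕ))) = 0 := by
          apply Matrix.det_zero_of_column_eq hne
          intro s
          simp only [Matrix.of_apply, h1, h2, Option.elim]
        rw [this, mul_zero]
      rw [hLL0]
      refine Tendsto.congr (fun n => ?_) tendsto_const_nhds
      rw [hDD0 n, zero_div]
    · by_cases hform : ∃ κ', κ = ι κ'
      · obtain ⟨κ', rfl⟩ := hform
        have hinj : Function.Injective κ' := by
          intro x y hxy
          by_contra hne
          exact hdup ⟨x, y, Fin.castLE hj (κ' x), hne, rfl, by rw [hι, hxy]⟩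
        have hDD : ∀ n, DD r c b k j (ι κ') n = R ^ n * LL r c k j (ι κ') := by
          intro n
          have hent : (Matrix.of fun s ℓ : Fin j =>
              gg r c b (ι κ' ℓ) (k + (ℓ : ℕ)) (n + (s : ℕ))) =
            (Matrix.of fun s ℓ : Fin j => (fun ℓ' : Fin j => r (Fin.castLE hj (κ' ℓ')) ^ n) ℓ *
              (Matrix.of fun s ℓ : Fin j =>
                (ι κ' ℓ).elim 0 (fun t => if (t : ℕ) < j then
                  c (k + (ℓ : ℕ)) t * r t ^ (k + (ℓ : ℕ) + 1 + (s : ℕ)) else 0)) s ℓ) := by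
            funext s ℓ
            simp only [Matrix.of_apply, hι, Option.elim, gg]
            rw [if_pos (by exact (κ' ℓ).isLt)]
            rw [show (n + (s : ℕ)) + (k + (ℓ : ℕ)) + 1 = n + (k + (ℓ : ℕ) + 1 + (s : ℕ)) by omega,
              pow_add]
            ring
          rw [DD, hent, Matrix.det_mul_row, ← LL]
          congr 1
          rw [Finset.prod_pow]
          congr 1
          exact Equiv.prod_comp (Equiv.ofBijective κ'
            (Finite.injective_iff_bijective.mp hinj)) (fun t => r (Fin.castLE hj t))
        refine Tendsto.congr (fun n => ?_) tendsto_const_nhds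
        rw [hDD n, mul_div_cancel_left₀ _ (pow_ne_zero n hR0)]
      · -- norm bound case
        have hLL0 : LL r c k j κ = 0 := by
          apply hvanish κ
          intro hmem
          obtain ⟨κ', _, hκ'⟩ := Finset.mem_image.mp hmem
          exact hform ⟨κ', hκ'.symm⟩
        rw [hLL0]
        have hinjs : ∀ ℓ1 ℓ2 t, κ ℓ1 = some t → κ ℓ2 = some t → ℓ1 = ℓ2 := by
          intro ℓ1 ℓ2 t h1 h2
          by_contra hne
          exact hdup ⟨ℓ1, ℓ2, t, hne, h1, h2⟩
        have hbad : (∃ ℓ, κ ℓ = none) ∨ (∃ ℓ t, κ ℓ = some t ∧ j ≤ (t : ℕ)) := by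
          by_contra hcon
          push_neg at hcon
          obtain ⟨h1, h2⟩ := hcon
          apply hform
          have hex : ∀ ℓ, ∃ t : Fin j, κ ℓ = some (Fin.castLE hj t) := by
            intro ℓ
            rcases hk : κ ℓ with _ | t
            · exact absurd hk (h1 ℓ)
            · have ht := h2 ℓ t hk
              exact ⟨⟨(t : ℕ), by omega⟩, by congr 1⟩
          choose κ' hκ' using hex
          exact ⟨κ', funext hκ'⟩
        set q : Fin j → ℝ := fun ℓ => (κ ℓ).elim (ρ (k + (ℓ : ℕ))) (fun t => w t) with hq
        set Kc : Fin j → ℝ := fun ℓ => (κ ℓ).elim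
            (μ (k + (ℓ : ℕ)) * max 1 (ρ (k + (ℓ : ℕ))) ^ j)
            (fun t => ‖c (k + (ℓ : ℕ)) t‖ * w t ^ (k + (ℓ : ℕ) + 1) * max 1 (w t) ^ j) with hKc
        have hKpos : ∀ ℓ, 0 ≤ Kc ℓ := by
          intro ℓ
          rcases hk : κ ℓ with _ | t
          · simp only [hKc, hk, Option.elim]
            exact mul_nonneg (hμ _).le
              (pow_nonneg (le_trans zero_le_one (le_max_left _ _)) _)
          · simp only [hKc, hk, Option.elim]
            exact mul_nonneg (mul_nonneg (norm_nonneg _) (pow_nonneg (hw t).le _))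
              (pow_nonneg (le_trans zero_le_one (le_max_left _ _)) _)
        have hqpos : ∀ ℓ, 0 < q ℓ := by
          intro ℓ
          rcases hk : κ ℓ with _ | t
          · simp only [hq, hk, Option.elim]
            exact hρpos _
          · simp only [hq, hk, Option.elim]
            exact hw t
        have hentry : ∀ (n : ℕ) (s ℓ : Fin j),
            ‖gg r c b (κ ℓ) (k + (ℓ : ℕ)) (n + (s : ℕ))‖ ≤ Kc ℓ * q ℓ ^ n := by
          intro n s ℓ
          rcases hk : κ ℓ with _ | t
          · simp only [hq, hKc, gg, hk, Option.elim]
            calc ‖b (k + (ℓ : ℕ)) (n + (s : ℕ))‖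
                ≤ μ (k + (ℓ : ℕ)) * ρ (k + (ℓ : ℕ)) ^ (n + (s : ℕ)) := hb _ _
              _ = μ (k + (ℓ : ℕ)) * ρ (k + (ℓ : ℕ)) ^ (s : ℕ) * ρ (k + (ℓ : ℕ)) ^ n := by
                  rw [pow_add]; ring
              _ ≤ μ (k + (ℓ : ℕ)) * max 1 (ρ (k + (ℓ : ℕ))) ^ j * ρ (k + (ℓ : ℕ)) ^ n := by
                  have h1 : ρ (k + (ℓ : ℕ)) ^ (s : ℕ) ≤ max 1 (ρ (k + (ℓ : ℕ))) ^ j :=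
                    le_trans (pow_le_pow_left₀ (hρpos _).le (le_max_right _ _) _)
                      (pow_le_pow_right₀ (le_max_left _ _) (le_of_lt s.isLt))
                  exact mul_le_mul_of_nonneg_right
                    (mul_le_mul_of_nonneg_left h1 (hμ _).le)
                    (pow_nonneg (hρpos _).le n)
          · simp only [hq, hKc, gg, hk, Option.elim]
            rw [norm_mul, norm_pow]
            have hrw2 : ‖r t‖ ^ ((n + (s : ℕ)) + (k + (ℓ : ℕ)) + 1) =
                ‖r t‖ ^ (k + (ℓ : ℕ) + 1) * ‖r t‖ ^ (s : ℕ) * ‖r t‖ ^ n := by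
              rw [← pow_add, ← pow_add]; congr 1; omega
            rw [hrw2]
            have h1 : ‖r t‖ ^ (s : ℕ) ≤ max 1 ‖r t‖ ^ j :=
              le_trans (pow_le_pow_left₀ (norm_nonneg _) (le_max_right _ _) _)
                (pow_le_pow_right₀ (le_max_left _ _) (le_of_lt s.isLt))
            calc ‖c (k + (ℓ : ℕ)) t‖ * (‖r t‖ ^ (k + (ℓ : ℕ) + 1) * ‖r t‖ ^ (s : ℕ) * ‖r t‖ ^ n)
                = (‖c (k + (ℓ : ℕ)) t‖ * ‖r t‖ ^ (k + (ℓ : ℕ) + 1) * ‖r t‖ ^ (s : ℕ)) * ‖r t‖ ^ n := by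
                  ring
              _ ≤ (‖c (k + (ℓ : ℕ)) t‖ * ‖r t‖ ^ (k + (ℓ : ℕ) + 1) * max 1 ‖r t‖ ^ j) * ‖r t‖ ^ n := by
                  refine mul_le_mul_of_nonneg_right ?_ (pow_nonneg (norm_nonneg _) n)
                  exact mul_le_mul_of_nonneg_left h1
                    (mul_nonneg (norm_nonneg _) (pow_nonneg (norm_nonneg _) _))
              _ = _ := rfl
        have hDb : ∀ n, ‖DD r c b k j κ n‖ ≤
            ((j.factorial : ℝ) * ∏ ℓ, Kc ℓ) * (∏ ℓ, q ℓ) ^ n := by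
          intro n
          have hdn := det_norm_le (Matrix.of fun s ℓ : Fin j =>
              gg r c b (κ ℓ) (k + (ℓ : ℕ)) (n + (s : ℕ)))
            (fun ℓ => Kc ℓ * q ℓ ^ n)
            (fun ℓ => mul_nonneg (hKpos ℓ) (pow_nonneg (hqpos ℓ).le n))
            (fun s ℓ => hentry n s ℓ)
          rw [DD]
          refine le_trans hdn (le_of_eq ?_)
          rw [Finset.prod_mul_distrib, Finset.prod_pow]
          ring
        have hqlt : (∏ ℓ, q ℓ) < ‖R‖ := by
          rw [hnormR]
          refine prodQ hm1 hj w hw (fun t1 t2 h => hrdec t1 t2 h) q κ ?_ ?_ hinjs hbad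
          · intro ℓ t hk; simp [hq, hk]
          · intro ℓ hk
            simp only [hq, hk, Option.elim]
            exact ⟨hρpos _, hρlt _⟩
        exact tendsto_div_pow_zero
          (Finset.prod_nonneg (fun ℓ _ => (hqpos ℓ).le)) hqlt hDb
  have hfin := tendsto_finset_sum Finset.univ
    (fun (κ : Fin j → Option (Fin m)) (_ : κ ∈ Finset.univ) => hten κ)
  rw [← hsum]
  refine Tendsto.congr (fun n => ?_) hfin
  rw [casorati_eq_sum r c b a ha k j n, Finset.sum_div]


noncomputable def PP {m : ℕ} (r : Fin m → ℂ) (j : ℕ) (hj : j ≤ m) : ℂ :=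
  ∏ ℓ : Fin j, r (Fin.castLE hj ℓ)

lemma PP_ne_zero {m : ℕ} (r : Fin m → ℂ) (hr0 : ∀ ℓ, r ℓ ≠ 0) (j : ℕ) (hj : j ≤ m) :
    PP r j hj ≠ 0 :=
  Finset.prod_ne_zero_iff.mpr (fun ℓ _ => hr0 _)

lemma PP_succ {m : ℕ} (r : Fin m → ℂ) (j : ℕ) (hj : j + 1 ≤ m) :
    PP r (j + 1) hj = PP r j (by omega) * r ⟨j, by omega⟩ := by
  rw [PP, Fin.prod_univ_castSucc]
  congr 1

lemma cancel_right (A B K : ℂ) (hK : K ≠ 0) : A * K / (B * K) = A / B := by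
  rcases eq_or_ne B 0 with rfl | hB
  · simp
  · field_simp

lemma ratio_id (C1 C2 C3 C4 z2 ra rb : ℂ) (n : ℕ)
    (hz2 : z2 ≠ 0) (hra : ra ≠ 0) (hrb : rb ≠ 0) :
    (C1 / (z2 * ra * rb) ^ n * (C2 / z2 ^ n)) /
      ((C3 / (z2 * ra) ^ n) * (C4 / (z2 * ra) ^ n)) * (rb / ra) ^ n
      = C1 * C2 / (C3 * C4) := by
  rw [div_mul_div_comm, div_mul_div_comm, div_div_div_eq, div_pow, div_mul_div_comm]
  have h1 : C1 * C2 * ((z2 * ra) ^ n * (z2 * ra) ^ n) * rb ^ n =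
      (C1 * C2) * ((z2 * ra) ^ n * (z2 * ra) ^ n * rb ^ n) := by ring
  have h2 : (z2 * ra * rb) ^ n * z2 ^ n * (C3 * C4) * ra ^ n =
      (C3 * C4) * ((z2 * ra) ^ n * (z2 * ra) ^ n * rb ^ n) := by ring
  rw [h1, h2]
  exact cancel_right _ _ _ (by
    exact mul_ne_zero (mul_ne_zero (pow_ne_zero _ (mul_ne_zero hz2 hra))
      (pow_ne_zero _ (mul_ne_zero hz2 hra))) (pow_ne_zero _ hrb))

lemma ratio_id2 (C1 C2 C3 C4 zp zq : ℂ) (n : ℕ)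
    (hzp : zp ≠ 0) (hzq : zq ≠ 0) :
    (C1 / zp ^ n * (C2 / zq ^ n)) / ((C3 / zq ^ n) * (C4 / zp ^ n))
      = C1 * C2 / (C3 * C4) := by
  rw [div_mul_div_comm, div_mul_div_comm, div_div_div_eq]
  have h1 : C1 * C2 * (zq ^ n * zp ^ n) = (C1 * C2) * (zp ^ n * zq ^ n) := by ring
  have h2 : zp ^ n * zq ^ n * (C3 * C4) = (C3 * C4) * (zp ^ n * zq ^ n) := by ring
  rw [h1, h2]
  exact cancel_right _ _ _ (mul_ne_zero (pow_ne_zero _ hzp) (pow_ne_zero _ hzq))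

/- STATEMENT 9: asymptotic behaviour of the auxiliary variables v_k^{(n)} of the
dhLV system: v_{i+j(M+1)}^{(n)} → 0 for i = 0,…,M−1, and
v_{M+j(M+1)}^{(n)} → ĉ_j = c_{M,j+1} c_{0,j} / (c_{M,j} c_{0,j+1}). -/
theorem dhLV_auxiliary_convergence
    (M m : ℕ) (hM : 1 ≤ M) (hm : 2 ≤ m)
    (a b : ℕ → ℕ → ℂ)
    (r : Fin m → ℂ) (c : ℕ → Fin m → ℂ) (ρ μ : ℕ → ℝ)
    (hr0 : ∀ ℓ, r ℓ ≠ 0)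
    (hrdec : ∀ ℓ₁ ℓ₂ : Fin m, ℓ₁ < ℓ₂ → ‖r ℓ₂‖ < ‖r ℓ₁‖)
    (hc : ∀ k ℓ, c k ℓ ≠ 0)
    (hρpos : ∀ k, 0 < ρ k)
    (hρlt : ∀ k, ρ k < ‖r ⟨m - 1, by omega⟩‖)
    (hμ : ∀ k, 0 < μ k)
    (hb : ∀ k n : ℕ, ‖b k n‖ ≤ μ k * ρ k ^ n)
    (ha : ∀ k n : ℕ, a k n = (∑ ℓ, c k ℓ * r ℓ ^ (n + k + 1)) + b k n)
    (hcnz : ∀ k ≤ M, ∀ j, ∀ h : j ≤ m, leadConst m r c k j h ≠ 0) :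
    (∀ i < M, ∀ j, 1 ≤ j → j ≤ m - 1 →
      (∃ N : ℕ, ∀ n ≥ N, casorati a i j n * casorati a (i + 1) j n ≠ 0) ∧
      Filter.Tendsto
        (fun n => casorati a i (j + 1) n * casorati a (i + 1) (j - 1) n /
          (casorati a i j n * casorati a (i + 1) j n))
        Filter.atTop (nhds 0)) ∧
    (∀ j, ∀ hjm : j ≤ m - 1,
      (∃ N : ℕ, ∀ n ≥ N, casorati a M j n * casorati a 0 (j + 1) n ≠ 0) ∧
      Filter.Tendsto
        (fun n => casorati a M (j + 1) n * casorati a 0 j n /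
          (casorati a M j n * casorati a 0 (j + 1) n))
        Filter.atTop
        (nhds (leadConst m r c M (j + 1) (by omega) * leadConst m r c 0 j (by omega) /
          (leadConst m r c M j (by omega) * leadConst m r c 0 (j + 1) (by omega))))) := by
  have hm1 : 1 ≤ m := by omega
  have hkey : ∀ k j (hj : j ≤ m),
      Tendsto (fun n => casorati a k j n / (PP r j hj) ^ n) atTop
        (nhds (leadConst m r c k j hj)) := by
    intro k j hj
    exact key hm1 a b r c ρ μ hr0 hrdec hρpos hρlt hμ hb ha k j hj
  have hev : ∀ k, k ≤ M → ∀ j (hj : j ≤ m), ∀ᶠ n in atTop, casorati a k j n ≠ 0 := by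
    intro k hk j hj
    have h1 := (hkey k j hj).eventually_ne (hcnz k hk j hj)
    refine h1.mono (fun n hn h0 => hn ?_)
    rw [h0, zero_div]
  constructor
  · intro i hi j hj1 hjm
    have hip : i + 1 ≤ M := by omega
    have hiM : i ≤ M := by omega
    obtain ⟨j', rfl⟩ : ∃ j', j = j' + 1 := ⟨j - 1, by omega⟩
    have hjm' : j' + 1 ≤ m := by omega
    have hj2m : j' + 2 ≤ m := by omega
    have hj'm : j' ≤ m := by omega
    simp only [Nat.add_sub_cancel]
    have hevC3 := hev i hiM (j' + 1) hjm'
    have hevC4 := hev (i + 1) hip (j' + 1) hjm'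
    refine ⟨?_, ?_⟩
    · obtain ⟨N, hN⟩ := Filter.eventually_atTop.mp (hevC3.and hevC4)
      exact ⟨N, fun n hn => mul_ne_zero (hN n hn).1 (hN n hn).2⟩
    · set ra := r ⟨j', by omega⟩ with hra'
      set rb := r ⟨j' + 1, by omega⟩ with hrb'
      have hx1 := hkey i (j' + 2) hj2m
      have hx2 := hkey (i + 1) j' hj'm
      have hx3 := hkey i (j' + 1) hjm'
      have hx4 := hkey (i + 1) (j' + 1) hjm'
      have hden : leadConst m r c i (j' + 1) hjm' *
          leadConst m r c (i + 1) (j' + 1) hjm' ≠ 0 :=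
        mul_ne_zero (hcnz i hiM _ _) (hcnz (i + 1) hip _ _)
      have hg : Tendsto (fun n =>
          ((casorati a i (j' + 2) n / (PP r (j' + 2) hj2m) ^ n) *
           (casorati a (i + 1) j' n / (PP r j' hj'm) ^ n)) /
          ((casorati a i (j' + 1) n / (PP r (j' + 1) hjm') ^ n) *
           (casorati a (i + 1) (j' + 1) n / (PP r (j' + 1) hjm') ^ n)) * (rb / ra) ^ n)
          atTop (nhds 0) := by
        have h1 := (hx1.mul hx2).div (hx3.mul hx4) hden
        have h2 : Tendsto (fun n : ℕ => (rb / ra) ^ n) atTop (nhds 0) := by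
          apply tendsto_pow_atTop_nhds_zero_of_norm_lt_one
          rw [norm_div, div_lt_one (norm_pos_iff.mpr (hr0 _))]
          exact hrdec _ _ (by rw [Fin.lt_def]; simp)
        have h3 := h1.mul h2
        rwa [mul_zero] at h3
      refine Tendsto.congr' ?_ hg
      filter_upwards [hevC3, hevC4] with n h3 h4
      have hz2 : PP r j' hj'm ≠ 0 := PP_ne_zero r hr0 _ _
      have hz3 : PP r (j' + 1) hjm' ≠ 0 := PP_ne_zero r hr0 _ _
      have hra : ra ≠ 0 := hr0 _
      have hrb : rb ≠ 0 := hr0 _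
      have e1 : PP r (j' + 2) hj2m = PP r (j' + 1) hjm' * rb := PP_succ r (j' + 1) hj2m
      have e2 : PP r (j' + 1) hjm' = PP r j' hj'm * ra := PP_succ r j' hjm'
      rw [e1, e2]
      exact ratio_id _ _ _ _ _ _ _ n hz2 hra hrb
  · intro j hjm
    have hj1 : j + 1 ≤ m := by omega
    have hj0 : j ≤ m := by omega
    have hevC3 := hev M le_rfl j hj0
    have hevC4 := hev 0 (by omega) (j + 1) hj1
    refine ⟨?_, ?_⟩
    · obtain ⟨N, hN⟩ := Filter.eventually_atTop.mp (hevC3.and hevC4)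
      exact ⟨N, fun n hn => mul_ne_zero (hN n hn).1 (hN n hn).2⟩
    · have hx1 := hkey M (j + 1) hj1
      have hx2 := hkey 0 j hj0
      have hx3 := hkey M j hj0
      have hx4 := hkey 0 (j + 1) hj1
      have hden : leadConst m r c M j hj0 * leadConst m r c 0 (j + 1) hj1 ≠ 0 :=
        mul_ne_zero (hcnz M le_rfl _ _) (hcnz 0 (by omega) _ _)
      have hg := (hx1.mul hx2).div (hx3.mul hx4) hden
      refine Tendsto.congr' ?_ hg
      filter_upwards [hevC3, hevC4] with n h3 h4
      have hzp : PP r (j + 1) hj1 ≠ 0 := PP_ne_zero r hr0 _ _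
      have hzq : PP r j hj0 ≠ 0 := PP_ne_zero r hr0 _ _
      exact ratio_id2 _ _ _ _ _ _ n hzp hzq
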